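/- Let n ≥ 1, b ≥ 1, k ≥ 1 be integers with k·b ≤ n, and let M be the n×n real lower triangular Toeplitz matrix with (M)[i,j] = m_{i−j} for i ≥ j and 0 otherwise, where m_0 ≥ m_1 ≥ … ≥ m_{n−1} ≥ 0. Then max_{π ∈ Π_{k,b}} Σ_{i∈π} Σ_{j∈π} (MᵀM)[i,j] = ‖Σ_{j=0}^{k−1} M_{[·, jb]}‖², where M_{[·, jb]} denotes the (jb)-th column of M; moreover this common value equals Σ_{i=0}^{n−1} ( Σ_{j=0}^{min(k−1, ⌊i/b⌋)} m_{i−jb} )². -/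

import Mathlib

open Finset Matrix

/-- Column inner product of the lower triangular Toeplitz matrix, at the level of `ℕ`. -/
private def Nv (n : ℕ) (m : ℕ → ℝ) (a b : ℕ) : ℝ :=
  ∑ r ∈ Finset.range n, (if a ≤ r then m (r - a) else 0) * (if b ≤ r then m (r - b) else 0)

section aux

variable {n : ℕ} {m : ℕ → ℝ}

private lemma m_anti (hmono : ∀ i : ℕ, i + 1 ≤ n - 1 → m (i + 1) ≤ m i)
    (i j : ℕ) (hij : i ≤ j) (hj : j ≤ n - 1) : m j ≤ m i := by
  induction j with
  | zero =>
      have : i = 0 := by omega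
      subst this; exact le_refl _
  | succ j ih =>
      rcases Nat.lt_or_ge i (j + 1) with h | h
      · exact le_trans (hmono j hj) (ih (by omega) (by omega))
      · have : i = j + 1 := by omega
        subst this; exact le_refl _

private lemma m_nonneg (hmono : ∀ i : ℕ, i + 1 ≤ n - 1 → m (i + 1) ≤ m i)
    (hlast : 0 ≤ m (n - 1)) (i : ℕ) (hi : i ≤ n - 1) : 0 ≤ m i :=
  le_trans hlast (m_anti hmono i (n - 1) hi le_rfl)

private lemma Nv_symm (a b : ℕ) : Nv n m a b = Nv n m b a :=
  Finset.sum_congr rfl fun r _ => mul_comm _ _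

private lemma Nv_eq (a b : ℕ) (hab : a ≤ b) (hbn : b ≤ n) :
    Nv n m a b = ∑ s ∈ Finset.range (n - b), m (s + (b - a)) * m s := by
  unfold Nv
  rw [Finset.range_eq_Ico, ← Finset.sum_Ico_consecutive _ (Nat.zero_le b) hbn]
  have h1 : ∑ r ∈ Finset.Ico 0 b,
      (if a ≤ r then m (r - a) else 0) * (if b ≤ r then m (r - b) else 0) = 0 := by
    apply Finset.sum_eq_zero
    intro r hr
    rw [Finset.mem_Ico] at hr
    rw [if_neg (show ¬ b ≤ r by omega), mul_zero]
  rw [h1, zero_add, Finset.sum_Ico_eq_sum_range]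
  apply Finset.sum_congr rfl
  intro s hs
  rw [if_pos (by omega), if_pos (by omega)]
  have h2 : b + s - a = s + (b - a) := by omega
  have h3 : b + s - b = s := by omega
  rw [h2, h3]

private lemma Nv_nonneg (hmono : ∀ i : ℕ, i + 1 ≤ n - 1 → m (i + 1) ≤ m i)
    (hlast : 0 ≤ m (n - 1)) (a b : ℕ) (hab : a ≤ b) (hbn : b < n) :
    0 ≤ Nv n m a b := by
  rw [Nv_eq a b hab (le_of_lt hbn)]
  apply Finset.sum_nonneg
  intro s hs
  rw [Finset.mem_range] at hs
  exact mul_nonneg (m_nonneg hmono hlast _ (by omega)) (m_nonneg hmono hlast _ (by omega))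

private lemma Nv_nonneg' (hmono : ∀ i : ℕ, i + 1 ≤ n - 1 → m (i + 1) ≤ m i)
    (hlast : 0 ≤ m (n - 1)) (a b : ℕ) (han : a < n) (hbn : b < n) :
    0 ≤ Nv n m a b := by
  rcases le_total a b with h | h
  · exact Nv_nonneg hmono hlast a b h hbn
  · rw [Nv_symm]; exact Nv_nonneg hmono hlast b a h han

private lemma Nv_le (hmono : ∀ i : ℕ, i + 1 ≤ n - 1 → m (i + 1) ≤ m i)
    (hlast : 0 ≤ m (n - 1)) (a c a' c' : ℕ) (hac : a ≤ c) (hac' : a' ≤ c')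
    (hcc : c' ≤ c) (hcn : c < n) (hd : c' - a' ≤ c - a) :
    Nv n m a c ≤ Nv n m a' c' := by
  rw [Nv_eq a c hac (le_of_lt hcn), Nv_eq a' c' hac' (by omega)]
  calc ∑ s ∈ Finset.range (n - c), m (s + (c - a)) * m s
      ≤ ∑ s ∈ Finset.range (n - c), m (s + (c' - a')) * m s := by
        apply Finset.sum_le_sum
        intro s hs
        rw [Finset.mem_range] at hs
        apply mul_le_mul_of_nonneg_right
        · exact m_anti hmono _ _ (by omega) (by omega)
        · exact m_nonneg hmono hlast _ (by omega)
    _ ≤ ∑ s ∈ Finset.range (n - c'), m (s + (c' - a')) * m s := by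
        apply Finset.sum_le_sum_of_subset_of_nonneg
        · exact Finset.range_subset_range.2 (by omega)
        · intro s hs _
          rw [Finset.mem_range] at hs
          exact mul_nonneg (m_nonneg hmono hlast _ (by omega))
            (m_nonneg hmono hlast _ (by omega))

private lemma sum_over_finset {N : ℕ} (π : Finset (Fin N)) (f : Fin N → ℝ) :
    ∑ i ∈ π, f i = ∑ t : Fin π.card, f (π.orderEmbOfFin rfl t) := by
  symm
  apply Finset.sum_bij (i := fun (t : Fin π.card) _ => π.orderEmbOfFin rfl t)
  · intro t _; exact π.orderEmbOfFin_mem rfl t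
  · intro t _ u _ h; exact (π.orderEmbOfFin rfl).injective h
  · intro x hx
    have : x ∈ Set.range (π.orderEmbOfFin rfl) := by
      rw [Finset.range_orderEmbOfFin]; exact hx
    obtain ⟨t, ht⟩ := this
    exact ⟨t, Finset.mem_univ t, ht⟩
  · intro t _; rfl

end aux
theorem sens_toeplitz_decreasing (n b k : ℕ) (hn : 1 ≤ n) (hb : 1 ≤ b) (hk : 1 ≤ k)
    (hkb : k * b ≤ n) (m : ℕ → ℝ)
    (hmono : ∀ i : ℕ, i + 1 ≤ n - 1 → m (i + 1) ≤ m i)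
    (hlast : 0 ≤ m (n - 1)) :
    IsGreatest
      { x : ℝ | ∃ π : Finset (Fin n), π.card ≤ k ∧
          (∀ i ∈ π, ∀ j ∈ π, i ≠ j → b ≤ Nat.dist (i : ℕ) (j : ℕ)) ∧
          x = ∑ i ∈ π, ∑ j ∈ π,
            ((Matrix.of fun i j : Fin n =>
                if (j : ℕ) ≤ (i : ℕ) then m ((i : ℕ) - (j : ℕ)) else 0)ᵀ *
              (Matrix.of fun i j : Fin n =>
                if (j : ℕ) ≤ (i : ℕ) then m ((i : ℕ) - (j : ℕ)) else 0)) i j }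
      (∑ i : Fin n,
        (∑ j : Fin k,
            (Matrix.of fun i j : Fin n =>
              if (j : ℕ) ≤ (i : ℕ) then m ((i : ℕ) - (j : ℕ)) else 0) i
            (⟨(j : ℕ) * b, by
              have h1 : (j : ℕ) + 1 ≤ k := j.isLt
              have h2 : ((j : ℕ) + 1) * b ≤ k * b := Nat.mul_le_mul h1 (le_refl b)
              calc (j : ℕ) * b < (j : ℕ) * b + b := Nat.lt_add_of_pos_right hb
                _ = ((j : ℕ) + 1) * b := by ring
                _ ≤ k * b := h2
                _ ≤ n := hkb⟩ : Fin n)) ^ 2) ∧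
      (∑ i : Fin n,
        (∑ j : Fin k,
            (Matrix.of fun i j : Fin n =>
              if (j : ℕ) ≤ (i : ℕ) then m ((i : ℕ) - (j : ℕ)) else 0) i
            (⟨(j : ℕ) * b, by
              have h1 : (j : ℕ) + 1 ≤ k := j.isLt
              have h2 : ((j : ℕ) + 1) * b ≤ k * b := Nat.mul_le_mul h1 (le_refl b)
              calc (j : ℕ) * b < (j : ℕ) * b + b := Nat.lt_add_of_pos_right hb
                _ = ((j : ℕ) + 1) * b := by ring
                _ ≤ k * b := h2
                _ ≤ n := hkb⟩ : Fin n)) ^ 2) =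
      ∑ i : Fin n,
        (∑ j ∈ Finset.range (min (k - 1) ((i : ℕ) / b) + 1), m ((i : ℕ) - j * b)) ^ 2 := by
  set M : Matrix (Fin n) (Fin n) ℝ :=
    Matrix.of fun i j : Fin n => if (j : ℕ) ≤ (i : ℕ) then m ((i : ℕ) - (j : ℕ)) else 0
    with hMdef
  have hbn' : ∀ t : ℕ, t < k → t * b < n := by
    intro t ht
    have h1 : (t + 1) * b ≤ k * b := Nat.mul_le_mul_right b (by omega)
    have h2 : (t + 1) * b = t * b + b := by ring
    omega
  have hcb : ∀ j : Fin k, (j : ℕ) * b < n := fun j => hbn' _ j.isLt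
  set c : Fin k → Fin n := fun j => ⟨(j : ℕ) * b, hcb j⟩ with hcdef
  have hMN : ∀ i j : Fin n, (Mᵀ * M) i j = Nv n m (i : ℕ) (j : ℕ) := by
    intro i j
    rw [Matrix.mul_apply]
    exact Fin.sum_univ_eq_sum_range
      (fun r => (if (i : ℕ) ≤ r then m (r - (i : ℕ)) else 0) *
        (if (j : ℕ) ≤ r then m (r - (j : ℕ)) else 0)) n
  have hinner : ∀ t u : Fin k,
      (∑ i : Fin n, M i (c t) * M i (c u)) = Nv n m ((t : ℕ) * b) ((u : ℕ) * b) := by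
    intro t u
    exact Fin.sum_univ_eq_sum_range
      (fun r => (if (t : ℕ) * b ≤ r then m (r - (t : ℕ) * b) else 0) *
        (if (u : ℕ) * b ≤ r then m (r - (u : ℕ) * b) else 0)) n
  have hkey : (∑ i : Fin n, (∑ j : Fin k, M i (c j)) ^ 2)
      = ∑ t : Fin k, ∑ u : Fin k, Nv n m ((t : ℕ) * b) ((u : ℕ) * b) := by
    calc ∑ i : Fin n, (∑ j : Fin k, M i (c j)) ^ 2
        = ∑ i : Fin n, ∑ t : Fin k, ∑ u : Fin k, M i (c t) * M i (c u) := by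
          apply Finset.sum_congr rfl
          intro i _
          rw [sq, Finset.sum_mul_sum]
      _ = ∑ t : Fin k, ∑ i : Fin n, ∑ u : Fin k, M i (c t) * M i (c u) := Finset.sum_comm
      _ = ∑ t : Fin k, ∑ u : Fin k, ∑ i : Fin n, M i (c t) * M i (c u) :=
          Finset.sum_congr rfl fun t _ => Finset.sum_comm
      _ = ∑ t : Fin k, ∑ u : Fin k, Nv n m ((t : ℕ) * b) ((u : ℕ) * b) :=
          Finset.sum_congr rfl fun t _ => Finset.sum_congr rfl fun u _ => hinner t u
  have hcinj : ∀ x ∈ (Finset.univ : Finset (Fin k)), ∀ y ∈ Finset.univ, c x = c y → x = y := by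
    intro x _ y _ hxy
    have : (x : ℕ) * b = (y : ℕ) * b := congrArg Fin.val hxy
    have : (x : ℕ) = (y : ℕ) := Nat.eq_of_mul_eq_mul_right hb this
    exact Fin.ext this
  constructor
  · constructor
    · -- membership
      refine ⟨Finset.image c Finset.univ, ?_, ?_, ?_⟩
      · exact le_trans Finset.card_image_le (by simp)
      · intro i hi j hj hij
        rw [Finset.mem_image] at hi hj
        obtain ⟨t, _, rfl⟩ := hi
        obtain ⟨u, _, rfl⟩ := hj
        have htu : (t : ℕ) ≠ (u : ℕ) := by
          intro h; exact hij (congrArg c (Fin.ext h))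
        show b ≤ Nat.dist ((t : ℕ) * b) ((u : ℕ) * b)
        rw [Nat.dist_mul_right]
        have h1 : 1 ≤ Nat.dist (t : ℕ) (u : ℕ) := by
          rcases Nat.eq_zero_or_pos (Nat.dist (t : ℕ) (u : ℕ)) with h | h
          · exact absurd (Nat.eq_of_dist_eq_zero h) htu
          · exact h
        calc b = 1 * b := (one_mul b).symm
          _ ≤ Nat.dist (t : ℕ) (u : ℕ) * b := Nat.mul_le_mul_right b h1
      · show (∑ i : Fin n, (∑ j : Fin k, M i (c j)) ^ 2) = _
        calc (∑ i : Fin n, (∑ j : Fin k, M i (c j)) ^ 2)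
            = ∑ t : Fin k, ∑ u : Fin k, Nv n m ((t : ℕ) * b) ((u : ℕ) * b) := hkey
          _ = ∑ t : Fin k, ∑ u : Fin k, (Mᵀ * M) (c t) (c u) :=
              Finset.sum_congr rfl fun t _ => Finset.sum_congr rfl fun u _ =>
                (hMN (c t) (c u)).symm
          _ = ∑ i ∈ Finset.image c Finset.univ, ∑ j ∈ Finset.image c Finset.univ,
                (Mᵀ * M) i j := by
              rw [Finset.sum_image hcinj]
              exact Finset.sum_congr rfl fun t _ => (Finset.sum_image hcinj).symm
    · -- upper bound
      rintro x ⟨π, hcard, hsep, rfl⟩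
      show _ ≤ ∑ i : Fin n, (∑ j : Fin k, M i (c j)) ^ 2
      set e := π.orderEmbOfFin rfl with hedef
      set w : ℕ → ℕ := fun t => if h : t < π.card then ((e ⟨t, h⟩ : Fin n) : ℕ) else 0
        with hwdef
      have hwe : ∀ t : Fin π.card, w (t : ℕ) = ((e t : Fin n) : ℕ) := by
        intro t
        simp only [hwdef, t.isLt, dif_pos, Fin.eta]
      have hwlt : ∀ t : ℕ, t < π.card → w t < n := by
        intro t ht
        have := (e ⟨t, ht⟩).isLt
        simp only [hwdef, dif_pos ht]
        exact this
      have hw1 : ∀ t : ℕ, t + 1 < π.card → w t + b ≤ w (t + 1) := by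
        intro t ht
        have h1 : t < π.card := by omega
        have hlt : e ⟨t, h1⟩ < e ⟨t + 1, ht⟩ :=
          (π.orderEmbOfFin rfl).strictMono (by exact Fin.mk_lt_mk.mpr (by omega))
        have hne : e ⟨t, h1⟩ ≠ e ⟨t + 1, ht⟩ := ne_of_lt hlt
        have hd := hsep (e ⟨t, h1⟩) (π.orderEmbOfFin_mem rfl _) (e ⟨t + 1, ht⟩) (π.orderEmbOfFin_mem rfl _) hne
        have hlt' : ((e ⟨t, h1⟩ : Fin n) : ℕ) < ((e ⟨t + 1, ht⟩ : Fin n) : ℕ) := hlt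
        simp only [Nat.dist] at hd
        simp only [hwdef, dif_pos h1, dif_pos ht]
        omega
      have hwd : ∀ d t : ℕ, t + d < π.card → w t + d * b ≤ w (t + d) := by
        intro d
        induction d with
        | zero => intro t ht; simp
        | succ d ih =>
            intro t ht
            have h1 : t + d < π.card := by omega
            have h2 := ih t h1
            have h3 := hw1 (t + d) (by omega)
            have h4 : (d + 1) * b = d * b + b := by ring
            have h5 : t + (d + 1) = t + d + 1 := by omega
            rw [h5]
            omega
      have hA' : ∀ t u : Fin π.card, (t : ℕ) ≤ (u : ℕ) →
          Nv n m ((e t : Fin n) : ℕ) ((e u : Fin n) : ℕ) ≤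
            Nv n m ((t : ℕ) * b) ((u : ℕ) * b) := by
        intro t u htu
        rw [← hwe t, ← hwe u]
        have hub : (u : ℕ) * b ≤ w (u : ℕ) := by
          have h1 := hwd (u : ℕ) 0 (by simpa using u.isLt)
          rw [zero_add] at h1
          have h2 : 0 ≤ w 0 := Nat.zero_le _
          omega
        have hgap2 : w (t : ℕ) + ((u : ℕ) - (t : ℕ)) * b ≤ w (u : ℕ) := by
          have h1 := hwd ((u : ℕ) - (t : ℕ)) (t : ℕ) (by omega)
          have h2 : (t : ℕ) + ((u : ℕ) - (t : ℕ)) = (u : ℕ) := by omega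
          rwa [h2] at h1
        have hsub : ((u : ℕ) - (t : ℕ)) * b = (u : ℕ) * b - (t : ℕ) * b := Nat.sub_mul _ _ _
        have hmul : (t : ℕ) * b ≤ (u : ℕ) * b := Nat.mul_le_mul_right b htu
        apply Nv_le hmono hlast
        · -- w t ≤ w u
          have : 0 ≤ ((u : ℕ) - (t : ℕ)) * b := Nat.zero_le _
          omega
        · exact hmul
        · exact hub
        · exact hwlt _ u.isLt
        · rw [hsub] at hgap2
          omega
      have hA : ∀ t u : Fin π.card,
          Nv n m ((e t : Fin n) : ℕ) ((e u : Fin n) : ℕ) ≤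
            Nv n m ((t : ℕ) * b) ((u : ℕ) * b) := by
        intro t u
        rcases le_total (t : ℕ) (u : ℕ) with h | h
        · exact hA' t u h
        · calc Nv n m ((e t : Fin n) : ℕ) ((e u : Fin n) : ℕ)
              = Nv n m ((e u : Fin n) : ℕ) ((e t : Fin n) : ℕ) := Nv_symm _ _
            _ ≤ Nv n m ((u : ℕ) * b) ((t : ℕ) * b) := hA' u t h
            _ = Nv n m ((t : ℕ) * b) ((u : ℕ) * b) := Nv_symm _ _
      have conv1 : ∀ N : ℕ,
          (∑ t : Fin N, ∑ u : Fin N, Nv n m ((t : ℕ) * b) ((u : ℕ) * b))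
            = ∑ t ∈ Finset.range N, ∑ u ∈ Finset.range N, Nv n m (t * b) (u * b) := by
        intro N
        calc (∑ t : Fin N, ∑ u : Fin N, Nv n m ((t : ℕ) * b) ((u : ℕ) * b))
            = ∑ t : Fin N, ∑ u ∈ Finset.range N, Nv n m ((t : ℕ) * b) (u * b) :=
              Finset.sum_congr rfl fun t _ =>
                Fin.sum_univ_eq_sum_range (fun u => Nv n m ((t : ℕ) * b) (u * b)) N
          _ = ∑ t ∈ Finset.range N, ∑ u ∈ Finset.range N, Nv n m (t * b) (u * b) :=
              Fin.sum_univ_eq_sum_range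
                (fun t => ∑ u ∈ Finset.range N, Nv n m (t * b) (u * b)) N
      calc ∑ i ∈ π, ∑ j ∈ π, (Mᵀ * M) i j
          = ∑ t : Fin π.card, ∑ u : Fin π.card, Nv n m ((e t : Fin n) : ℕ) ((e u : Fin n) : ℕ) := by
            rw [sum_over_finset π (fun i => ∑ j ∈ π, (Mᵀ * M) i j)]
            apply Finset.sum_congr rfl
            intro t _
            rw [sum_over_finset π (fun j => (Mᵀ * M) (e t) j)]
            exact Finset.sum_congr rfl fun u _ => hMN _ _
        _ ≤ ∑ t : Fin π.card, ∑ u : Fin π.card, Nv n m ((t : ℕ) * b) ((u : ℕ) * b) :=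
            Finset.sum_le_sum fun t _ => Finset.sum_le_sum fun u _ => hA t u
        _ = ∑ t ∈ Finset.range π.card, ∑ u ∈ Finset.range π.card, Nv n m (t * b) (u * b) :=
            conv1 π.card
        _ ≤ ∑ t ∈ Finset.range π.card, ∑ u ∈ Finset.range k, Nv n m (t * b) (u * b) := by
            apply Finset.sum_le_sum
            intro t ht
            rw [Finset.mem_range] at ht
            apply Finset.sum_le_sum_of_subset_of_nonneg (Finset.range_subset_range.2 hcard)
            intro u hu _
            rw [Finset.mem_range] at hu
            exact Nv_nonneg' hmono hlast _ _ (hbn' t (by omega)) (hbn' u hu)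
        _ ≤ ∑ t ∈ Finset.range k, ∑ u ∈ Finset.range k, Nv n m (t * b) (u * b) := by
            apply Finset.sum_le_sum_of_subset_of_nonneg (Finset.range_subset_range.2 hcard)
            intro t ht _
            rw [Finset.mem_range] at ht
            apply Finset.sum_nonneg
            intro u hu
            rw [Finset.mem_range] at hu
            exact Nv_nonneg' hmono hlast _ _ (hbn' t ht) (hbn' u hu)
        _ = ∑ t : Fin k, ∑ u : Fin k, Nv n m ((t : ℕ) * b) ((u : ℕ) * b) := (conv1 k).symm
        _ = ∑ i : Fin n, (∑ j : Fin k, M i (c j)) ^ 2 := hkey.symm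
  · -- final equality
    show (∑ i : Fin n, (∑ j : Fin k, M i (c j)) ^ 2) = _
    apply Finset.sum_congr rfl
    intro i _
    congr 1
    have hL : (∑ j : Fin k, M i (c j))
        = ∑ j ∈ Finset.range k, (if j * b ≤ (i : ℕ) then m ((i : ℕ) - j * b) else 0) :=
      Fin.sum_univ_eq_sum_range
        (fun j => if j * b ≤ (i : ℕ) then m ((i : ℕ) - j * b) else 0) k
    rw [hL, ← Finset.sum_filter]
    have hset : (Finset.range k).filter (fun j => j * b ≤ (i : ℕ))
        = Finset.range (min (k - 1) ((i : ℕ) / b) + 1) := by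
      ext j
      simp only [Finset.mem_filter, Finset.mem_range]
      constructor
      · rintro ⟨h1, h2⟩
        have h3 : j ≤ (i : ℕ) / b := (Nat.le_div_iff_mul_le hb).mpr h2
        omega
      · intro h
        have hj1 : j < k := by omega
        have hj2 : j ≤ (i : ℕ) / b := by omega
        exact ⟨hj1, (Nat.le_div_iff_mul_le hb).mp hj2⟩
    rw [hset]
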